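/- arXiv:1705.07530 — 7 statements merged into one kernel-verified Lean document; each statement's English description precedes it below -/
import Mathlib

section
/- Suppose integers $c_1,\dots,c_n$ satisfy: $c_1(c_1+c_n)=0$, $c_i(c_i+2c_{i-1})=0$ for all $2\le i\le n$, and $c_ic_j=0$ for all pairs $(i,j)$ with $i-j\ge 2$ and $(i,j)\ne(n,1)$. Then $c_i=0$ for all $i$. -/
theorem type3_quadratic_system_trivial (n : ℕ) (hn : 3 ≤ n) (c : ℕ → ℤ)
    (h1 : c 1 * (c 1 + c n) = 0)
    (h2 : ∀ i, 2 ≤ i → i ≤ n → c i * (c i + 2 * c (i - 1)) = 0)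
    (h3 : ∀ i j, i ≤ n → 1 ≤ j → j + 2 ≤ i → (i, j) ≠ (n, 1) → c i * c j = 0) :
    ∀ i, 1 ≤ i → i ≤ n → c i = 0 := by
  -- zeros propagate upward
  have up : ∀ k, 1 ≤ k → c k = 0 → ∀ m, k ≤ m → m ≤ n → c m = 0 := by
    intro k hk1 h0 m
    induction m with
    | zero => intro h _; omega
    | succ m ih =>
      intro hkm hmn
      rcases Nat.lt_or_ge k (m + 1) with h | h
      · have hm : c m = 0 := ih (by omega) (by omega)
        have hh := h2 (m + 1) (by omega) hmn
        simp only [Nat.add_sub_cancel, hm] at hh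
        have : c (m + 1) * c (m + 1) = 0 := by linarith [hh]
        exact mul_self_eq_zero.mp this
      · have : k = m + 1 := by omega
        rwa [← this]
  have key : c 1 = 0 := by
    by_contra h1ne
    have pow : ∀ i, 1 ≤ i → i ≤ n → c i = (-2) ^ (i - 1) * c 1 := by
      intro i
      induction i with
      | zero => intro h _; omega
      | succ i ih =>
        intro hi1 hin
        rcases Nat.eq_zero_or_pos i with h0 | hpos
        · subst h0; simp
        · have hprev : c i = (-2) ^ (i - 1) * c 1 := ih hpos (by omega)
          have hne : c i ≠ 0 := by
            rw [hprev]
            exact mul_ne_zero (pow_ne_zero _ (by norm_num)) h1ne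
          have hh := h2 (i + 1) (by omega) hin
          simp only [Nat.add_sub_cancel] at hh
          rcases mul_eq_zero.mp hh with hz | hz
          · -- c (i+1) = 0 forces c n = 0, then c 1 = 0
            have hcn : c n = 0 := up (i + 1) (by omega) hz n (by omega) le_rfl
            rw [hcn] at h1
            have : c 1 * c 1 = 0 := by linarith [h1]
            exact absurd (mul_self_eq_zero.mp this) h1ne
          · have hsucc : c (i + 1) = -2 * c i := by linarith
            have hi' : i - 1 + 1 = i := by omega
            have heq : (-2 : ℤ) ^ (i + 1 - 1) = -2 * (-2) ^ (i - 1) := by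
              rw [Nat.add_sub_cancel]
              conv_lhs => rw [← hi']
              rw [pow_succ]; ring
            rw [hsucc, hprev, heq]
            ring
    have hcn := pow n (by omega) le_rfl
    have hsum : c 1 + c n = 0 := by
      rcases mul_eq_zero.mp h1 with h | h
      · exact absurd h h1ne
      · exact h
    rw [hcn] at hsum
    have hfac : (1 + (-2 : ℤ) ^ (n - 1)) * c 1 = 0 := by ring_nf; linarith [hsum]
    have hcoef : (1 : ℤ) + (-2) ^ (n - 1) ≠ 0 := by
      intro hc
      have habs : |(-2 : ℤ) ^ (n - 1)| = 2 ^ (n - 1) := by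
        rw [abs_pow]; norm_num
      have hge : (2 : ℤ) ^ (n - 1) ≥ 2 ^ 2 := by
        apply pow_le_pow_right₀ (by norm_num) (by omega)
      have heq : (-2 : ℤ) ^ (n - 1) = -1 := by linarith
      rw [heq] at habs
      norm_num at habs
      omega
    rcases mul_eq_zero.mp hfac with h | h
    · exact hcoef h
    · exact h1ne h
  intro i hi1 hin
  exact up 1 le_rfl key i hi1 hin
end

section
/- Let $A$ be the $n\times n$ Type-2 matrix with entries $a_i=\pm 1$ ($\det A = 2$), let $J$ be the all-ones matrix, and define $R = A^{-1} + \frac{1}{2}J$. Then $R$ is an integer matrix. -/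
open Fin.NatCast
open Fin.CommRing

private def dd (n : ℕ) (i j : Fin n) : ℕ :=
  if (j:ℕ) ≤ (i:ℕ) then (i:ℕ) - (j:ℕ) else (i:ℕ) + n - (j:ℕ)

private def CC (n : ℕ) [NeZero n] (a : Fin n → ℚ) : Matrix (Fin n) (Fin n) ℚ :=
  Matrix.of fun i j =>
    (-1:ℚ)^(dd n i j) * ∏ t ∈ Finset.range (dd n i j), a (((j:ℕ) + t + 1 : ℕ) : Fin n)

private lemma cyc_prod (n : ℕ) [NeZero n] (a : Fin n → ℚ) (i : Fin n) :
    ∏ t ∈ Finset.range n, a ((((i:ℕ) + t + 1 : ℕ)) : Fin n) = ∏ j, a j := by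
  have h : ∀ t : ℕ, (((i:ℕ) + t + 1 : ℕ) : Fin n) = (t : Fin n) + (((i:ℕ) + 1 : ℕ) : Fin n) := by
    intro t; push_cast; ring
  rw [Finset.prod_congr rfl (fun t _ => by rw [h t])]
  have h2 := Fin.prod_univ_eq_prod_range (fun t => a ((t : Fin n) + (((i:ℕ) + 1 : ℕ) : Fin n))) n
  rw [← h2]
  simp only [Fin.cast_val_eq_self]
  exact Equiv.prod_comp (Equiv.addRight (((i:ℕ) + 1 : ℕ) : Fin n)) a

private lemma prodA (n : ℕ) (a : Fin n → ℚ) (ha : ∀ i, a i = 1 ∨ a i = -1)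
    (hodd : Odd (Finset.univ.filter (fun i => a i = 1)).card) :
    ∏ j, a j = (-1:ℚ)^(n-1) := by
  classical
  set k := (Finset.univ.filter (fun i => a i = 1)).card with hk
  have hsplit := Finset.prod_filter_mul_prod_filter_not Finset.univ (fun i => a i = 1) a
  have h1 : ∏ i ∈ Finset.univ.filter (fun i => a i = 1), a i = 1 :=
    Finset.prod_eq_one (fun i hi => (Finset.mem_filter.mp hi).2)
  have h2 : ∏ i ∈ Finset.univ.filter (fun i => ¬ a i = 1), a i = (-1:ℚ)^(n - k) := by
    rw [Finset.prod_congr rfl (fun i hi => ?_), Finset.prod_const]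
    · congr 1
      have := Finset.card_filter_add_card_filter_not (s := (Finset.univ : Finset (Fin n)))
        (p := fun i => a i = 1)
      simp only [Finset.card_univ, Fintype.card_fin] at this
      omega
    · rcases ha i with h | h
      · exact absurd h (Finset.mem_filter.mp hi).2
      · exact h
  have hkn : k ≤ n := by
    have := Finset.card_filter_le (Finset.univ : Finset (Fin n)) (fun i => a i = 1)
    simpa using this
  rw [← hsplit, h1, h2, one_mul]
  obtain ⟨c, hc⟩ := hodd
  rcases Nat.even_or_odd (n - k) with he | he
  · obtain ⟨x, hx⟩ := he
    have h3 : Even (n-1) := ⟨x + c, by omega⟩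
    rw [Even.neg_one_pow (α := ℚ) ⟨x, hx⟩, Even.neg_one_pow h3]
  · obtain ⟨x, hx⟩ := he
    have h3 : Odd (n-1) := ⟨x + c, by omega⟩
    rw [Odd.neg_one_pow (α := ℚ) ⟨x, by omega⟩, Odd.neg_one_pow h3]

/-- `cycMat n a` is the `n × n` matrix with `1`'s on the diagonal, `a 0` in the
`(0, n-1)` entry (i.e. the `(1,n)` entry in 1-based indexing), `a i` in the
`(i, i-1)` entry, and zeros elsewhere. -/
def cycMat (n : ℕ) {R : Type*} [CommRing R] (a : Fin n → R) : Matrix (Fin n) (Fin n) R :=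
  Matrix.of fun i j =>
    if i = j then 1 else if (i : ℕ) = ((j : ℕ) + 1) % n then a i else 0

/-- The all-ones matrix. -/
def allOnes (n : ℕ) : Matrix (Fin n) (Fin n) ℚ := Matrix.of fun _ _ => 1

private lemma AC (n : ℕ) (hn : 2 ≤ n) [NeZero n] (a : Fin n → ℚ)
    (ha : ∀ i, a i = 1 ∨ a i = -1)
    (hodd : Odd (Finset.univ.filter (fun i => a i = 1)).card) :
    cycMat n a * CC n a = (2:ℚ) • 1 := by
  have hn0 : 0 < n := by omega
  ext i l
  have hi := i.isLt
  have hl := l.isLt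
  obtain ⟨p, hp⟩ : ∃ p : Fin n, (p:ℕ) = ((i:ℕ) + n - 1) % n :=
    ⟨⟨_, Nat.mod_lt _ hn0⟩, rfl⟩
  have hpval : (p:ℕ) = if 1 ≤ (i:ℕ) then (i:ℕ) - 1 else n - 1 := by
    rw [hp]
    split_ifs with h
    · have h2 : (i:ℕ) + n - 1 = ((i:ℕ) - 1) + n := by omega
      simp only [h2, Nat.add_mod_right]
      exact Nat.mod_eq_of_lt (by omega)
    · have h2 : (i:ℕ) + n - 1 = n - 1 := by omega
      simp only [h2]
      exact Nat.mod_eq_of_lt (by omega)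
  have hip : i ≠ p := by
    intro h
    have h2 := congrArg Fin.val h
    rw [hpval] at h2; split_ifs at h2 <;> omega
  have hiff : ∀ j : Fin n, ((i:ℕ) = ((j:ℕ)+1) % n) ↔ j = p := by
    intro j
    have hj := j.isLt
    constructor
    · intro h
      apply Fin.ext
      rw [hpval]
      by_cases hc : (j:ℕ) + 1 < n
      · rw [Nat.mod_eq_of_lt hc] at h
        split_ifs with h2 <;> omega
      · have hjn : (j:ℕ) + 1 = n := by omega
        rw [hjn, Nat.mod_self] at h
        split_ifs with h2 <;> omega
    · rintro rfl
      rw [hpval]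
      split_ifs with h2
      · have h3 : ((i:ℕ) - 1 + 1) = (i:ℕ) := by omega
        rw [h3, Nat.mod_eq_of_lt hi]
      · have h3 : n - 1 + 1 = n := by omega
        rw [h3, Nat.mod_self]; omega
  rw [Matrix.mul_apply]
  have hsum : ∀ j : Fin n, cycMat n a i j * CC n a j l =
      (if j = i then CC n a i l else 0) + (if j = p then a i * CC n a p l else 0) := by
    intro j
    simp only [cycMat, Matrix.of_apply]
    by_cases h1 : j = i
    · subst h1; simp [hip]
    · by_cases h2 : j = p
      · rw [if_neg (fun h => h1 (Eq.symm h)), if_pos ((hiff j).mpr h2), if_neg h1, if_pos h2,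
          zero_add, h2]
      · have hm : ¬ ((i:ℕ) = ((j:ℕ)+1) % n) := fun h => h2 ((hiff j).mp h)
        rw [if_neg (fun h => h1 (Eq.symm h)), if_neg hm, if_neg h1, if_neg h2, zero_mul, add_zero]
  rw [Finset.sum_congr rfl (fun j _ => hsum j), Finset.sum_add_distrib,
      Finset.sum_ite_eq' Finset.univ i (fun _ => CC n a i l),
      Finset.sum_ite_eq' Finset.univ p (fun _ => a i * CC n a p l)]
  simp only [Finset.mem_univ, if_true]
  rw [Matrix.smul_apply, Matrix.one_apply]
  by_cases hil : i = l
  · subst hil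
    rw [if_pos rfl]
    have hd0 : dd n i i = 0 := by simp [dd]
    have hdp : dd n p i = n - 1 := by
      simp only [dd, hpval]
      split_ifs <;> omega
    have hcast : ((((i:ℕ) + (n-1) + 1 : ℕ)) : Fin n) = i := by
      apply Fin.ext; rw [Fin.val_natCast]
      have h3 : (i:ℕ) + (n-1) + 1 = (i:ℕ) + n := by omega
      rw [h3, Nat.add_mod_right, Nat.mod_eq_of_lt hi]
    have hrs := Finset.prod_range_succ (fun t => a (((i:ℕ) + t + 1 : ℕ) : Fin n)) (n-1)
    rw [(by omega : (n-1)+1 = n)] at hrs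
    have key : a i * ∏ t ∈ Finset.range (n-1), a (((i:ℕ) + t + 1 : ℕ) : Fin n) = (-1:ℚ)^(n-1) := by
      rw [hcast] at hrs
      rw [mul_comm, ← hrs, cyc_prod n a i, prodA n a ha hodd]
    simp only [CC, Matrix.of_apply, hd0, hdp, pow_zero, Finset.range_zero,
      Finset.prod_empty, mul_one, one_mul]
    have e1 : a i * ((-1:ℚ)^(n-1) * ∏ t ∈ Finset.range (n-1), a (((i:ℕ) + t + 1 : ℕ) : Fin n))
        = (-1:ℚ)^(n-1) * (a i * ∏ t ∈ Finset.range (n-1), a (((i:ℕ) + t + 1 : ℕ) : Fin n)) := by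
      ring
    rw [e1, key, ← pow_add, Even.neg_one_pow ⟨n-1, rfl⟩]
    norm_num
  · rw [if_neg hil, smul_zero]
    have hvne : (i:ℕ) ≠ (l:ℕ) := fun h => hil (Fin.ext h)
    obtain ⟨e, he⟩ : ∃ e, dd n i l = e + 1 := by
      refine ⟨dd n i l - 1, ?_⟩
      simp only [dd]; split_ifs <;> omega
    have he' : dd n i l = e + 1 := he
    simp only [dd] at he'
    have hdp : dd n p l = e := by
      simp only [dd, hpval]
      split_ifs at he' ⊢ <;> omega
    have hlast : (((l:ℕ) + e + 1 : ℕ) : Fin n) = i := by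
      apply Fin.ext; rw [Fin.val_natCast]
      split_ifs at he'
      · have h3 : (l:ℕ) + e + 1 = (i:ℕ) := by omega
        rw [h3, Nat.mod_eq_of_lt hi]
      · have h3 : (l:ℕ) + e + 1 = (i:ℕ) + n := by omega
        rw [h3, Nat.add_mod_right, Nat.mod_eq_of_lt hi]
    simp only [CC, Matrix.of_apply, he, hdp]
    rw [Finset.prod_range_succ, hlast, pow_succ]
    ring

theorem R_is_integer_matrix (n : ℕ) (hn : 2 ≤ n) (a : Fin n → ℚ)
    (ha : ∀ i, a i = 1 ∨ a i = -1)
    (hodd : Odd (Finset.univ.filter (fun i => a i = 1)).card) :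
    ∀ i j, ∃ m : ℤ, ((cycMat n a)⁻¹ + (1 / 2 : ℚ) • allOnes n) i j = (m : ℚ) := by
  haveI : NeZero n := ⟨by omega⟩
  intro i j
  have hinv : (cycMat n a)⁻¹ = (1/2 : ℚ) • CC n a := by
    apply Matrix.inv_eq_right_inv
    rw [Matrix.mul_smul, AC n hn a ha hodd, smul_smul]
    norm_num
  have hC : CC n a i j = 1 ∨ CC n a i j = -1 := by
    have hprod := Finset.prod_induction (s := Finset.range (dd n i j))
      (fun t => a (((j:ℕ) + t + 1 : ℕ) : Fin n)) (fun x => x = 1 ∨ x = -1)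
      (by rintro x y (rfl|rfl) (rfl|rfl) <;> norm_num) (Or.inl rfl)
      (fun x _ => ha _)
    have hsign : (-1:ℚ)^(dd n i j) = 1 ∨ (-1:ℚ)^(dd n i j) = -1 := by
      rcases Nat.even_or_odd (dd n i j) with h|h
      · exact Or.inl h.neg_one_pow
      · exact Or.inr h.neg_one_pow
    simp only [CC, Matrix.of_apply]
    rcases hsign with h1|h1 <;> rcases hprod with h2|h2 <;> rw [h1, h2] <;> norm_num
  rw [hinv]
  rcases hC with h | h
  · exact ⟨1, by norm_num [Matrix.add_apply, Matrix.smul_apply, allOnes, h]⟩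
  · exact ⟨0, by norm_num [Matrix.add_apply, Matrix.smul_apply, allOnes, h]⟩
end

section
/- Conversely to the previous statement: if integers $b_1,\dots,b_n$ and $b'_1,\dots,b'_n$ each sum to $1$, and there exist integers $c_1,\dots,c_n$ with $\sum_{i=1}^n c_i=0$ and $c_i-c_{i-1}=b_i-b'_i$ for all $i$ (with $c_0=c_n$), then $\sum_{i=1}^{n-1}(n-i)b_i\equiv \sum_{i=1}^{n-1}(n-i)b'_i\pmod n$. -/
theorem congruent_weighted_sums_of_exists_c (n : ℕ) (hn : 2 ≤ n) (b b' : ℕ → ℤ)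
    (hb : ∑ i ∈ Finset.Icc 1 n, b i = 1) (hb' : ∑ i ∈ Finset.Icc 1 n, b' i = 1)
    (c : ℕ → ℤ) (hc0 : ∑ i ∈ Finset.Icc 1 n, c i = 0) (hcn : c 0 = c n)
    (hc : ∀ i, 1 ≤ i → i ≤ n → c i - c (i - 1) = b i - b' i) :
    (n : ℤ) ∣ (∑ i ∈ Finset.Icc 1 (n - 1), ((n : ℤ) - i) * b i
      - ∑ i ∈ Finset.Icc 1 (n - 1), ((n : ℤ) - i) * b' i) := by
  obtain ⟨m, rfl⟩ : ∃ m, n = m + 2 := ⟨n - 2, by omega⟩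
  rw [← Finset.sum_sub_distrib]
  push_cast
  have hcongr : ∀ i ∈ Finset.Icc 1 (m + 1),
      ((m + 2 : ℤ) - i) * b i - ((m + 2 : ℤ) - i) * b' i
        = ((m + 2 : ℤ) - i) * (c i - c (i - 1)) := by
    intro i hi
    simp only [Finset.mem_Icc] at hi
    rw [hc i hi.1 (by omega)]; ring
  rw [Finset.sum_congr rfl hcongr]
  have aux : ∀ M : ℕ, ∑ i ∈ Finset.Icc 1 M, ((m + 2 : ℤ) - i) * (c i - c (i - 1))
      = ((m + 2 : ℤ) - M) * c M + (∑ i ∈ Finset.range M, c i) - (m + 2 : ℤ) * c 0 := by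
    intro M
    induction M with
    | zero => simp
    | succ k ih =>
      rw [Finset.sum_Icc_succ_top (by omega), ih, Finset.sum_range_succ]
      have hk : k + 1 - 1 = k := rfl
      rw [hk]
      push_cast
      ring
  rw [aux]
  have hr : ∑ i ∈ Finset.range (m + 3), c i = c 0 + ∑ i ∈ Finset.Icc 1 (m + 2), c i := by
    rw [Finset.sum_range_succ']
    have : ∑ i ∈ Finset.Icc 1 (m + 2), c i = ∑ i ∈ Finset.range (m + 2), c (1 + i) := by
      rw [← Finset.Ico_add_one_right_eq_Icc, Finset.sum_Ico_eq_sum_range]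
      norm_num
    simp [this, add_comm]
  rw [Finset.sum_range_succ, Finset.sum_range_succ, hc0] at hr
  refine ⟨-c (m + 2), ?_⟩
  push_cast at hr ⊢
  rw [hcn] at hr ⊢
  linear_combination hr
end

section
/- The number of binary necklaces of length $n$ with an odd number of zeros, i.e., the number of equivalence classes under cyclic rotation of sequences in $\{0,1\}^n$ with an odd number of $0$'s, equals $\frac{1}{2n}\sum_{d\mid n,\ d\text{ odd}}\varphi(d)2^{n/d}$, where $\varphi$ is Euler's totient function. -/
open Finset

/-- Two binary sequences of length `n` (indexed by `ZMod n`) are related iff one is a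
cyclic rotation of the other. -/
def rotSetoid (n : ℕ) : Setoid (ZMod n → Bool) where
  r s t := ∃ k : ZMod n, ∀ i, t i = s (i + k)
  iseqv := by
    constructor
    · intro s; exact ⟨0, fun i => by rw [add_zero]⟩
    · rintro s t ⟨k, h⟩
      exact ⟨-k, fun i => by rw [h (i + -k)]; congr 1; ring⟩
    · rintro s t u ⟨k, h⟩ ⟨k', h'⟩
      exact ⟨k + k', fun i => by rw [h' i, h (i + k')]; congr 1; ring⟩

/-- The setoid of cyclic rotation restricted to binary sequences of length `n` with an
odd number of zeros. -/
def oddZeroNecklaceSetoid (n : ℕ) [NeZero n] :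
    Setoid {s : ZMod n → Bool // Odd (Finset.univ.filter (fun i => s i = false)).card} :=
  Setoid.comap Subtype.val (rotSetoid n)

/- rotation invariance of the zero count -/
lemma rot_card (n : ℕ) [NeZero n] (s : ZMod n → Bool) (k : ZMod n) :
    (Finset.univ.filter (fun i => s (i + k) = false)).card
      = (Finset.univ.filter (fun i => s i = false)).card := by
  apply Finset.card_bij (fun i _ => i + k)
  · intro a ha; simp only [mem_filter, mem_univ, true_and] at ha ⊢; exact ha
  · intro a _ b _ h; exact by simpa using congrArg (· - k) h
  · intro b hb
    refine ⟨b - k, ?_, by ring⟩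
    simp only [mem_filter, mem_univ, true_and] at hb ⊢
    simpa [sub_add_cancel] using hb

instance necklaceAction (n : ℕ) [NeZero n] :
    AddAction (ZMod n)
      {s : ZMod n → Bool // Odd (Finset.univ.filter (fun i => s i = false)).card} where
  vadd k s := ⟨fun i => s.1 (i + k), by
    have := s.2
    rwa [rot_card n s.1 k]⟩
  zero_vadd s := Subtype.ext (funext fun i => by show s.1 (i + 0) = s.1 i; rw [add_zero])
  add_vadd k k' s := Subtype.ext (funext fun i => by
    show s.1 (i + (k + k')) = s.1 (i + k + k')
    rw [add_assoc])

lemma oddZeroNecklaceSetoid_eq (n : ℕ) [NeZero n] :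
    oddZeroNecklaceSetoid n = AddAction.orbitRel (ZMod n)
      {s : ZMod n → Bool // Odd (Finset.univ.filter (fun i => s i = false)).card} := by
  apply Setoid.ext
  intro a b
  show (∃ k : ZMod n, ∀ i, b.1 i = a.1 (i + k)) ↔ a ∈ AddAction.orbit (ZMod n) b
  constructor
  · rintro ⟨k, h⟩
    have hmem : b ∈ AddAction.orbit (ZMod n) a :=
      ⟨k, Subtype.ext (funext fun i => (h i).symm)⟩
    exact Setoid.symm' _ ((AddAction.orbitRel_apply).mpr hmem)
  · intro h
    obtain ⟨k, hk⟩ : b ∈ AddAction.orbit (ZMod n) a :=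
      (AddAction.orbitRel_apply).mp (Setoid.symm' _ h)
    exact ⟨k, fun i => congrFun (congrArg Subtype.val hk.symm) i⟩

/-- number of boolean functions with an odd number of `false`s -/
lemma card_odd_bool {γ : Type*} [Fintype γ] [Nonempty γ] :
    Nat.card {f : γ → Bool // Odd (Finset.univ.filter (fun i => f i = false)).card}
      = 2 ^ (Fintype.card γ - 1) := by
  classical
  obtain ⟨a⟩ := ‹Nonempty γ›
  set zc : (γ → Bool) → ℕ := fun f => (Finset.univ.filter (fun i => f i = false)).card with hzc
  have key : ∀ f : γ → Bool, Odd (zc (Function.update f a (!f a))) ↔ ¬ Odd (zc f) := by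
    intro f
    set g := Function.update f a (!f a) with hg
    have hga : g a = !f a := Function.update_self a (!f a) f
    have hgi : ∀ i, i ≠ a → g i = f i := fun i hi => Function.update_of_ne hi _ f
    cases hfa : f a with
    | false =>
      have hmem : a ∈ Finset.univ.filter (fun i => f i = false) := by simp [hfa]
      have : Finset.univ.filter (fun i => g i = false)
          = (Finset.univ.filter (fun i => f i = false)).erase a := by
        ext i
        by_cases hi : i = a
        · subst hi; simp [hga, hfa]
        · simp [hgi i hi, hi]
      rw [hzc]
      simp only
      rw [this]
      have := Finset.card_erase_add_one hmem
      rw [← this, Nat.odd_add_one, not_not]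
    | true =>
      have hmem : a ∉ Finset.univ.filter (fun i => f i = false) := by simp [hfa]
      have : Finset.univ.filter (fun i => g i = false)
          = insert a (Finset.univ.filter (fun i => f i = false)) := by
        ext i
        by_cases hi : i = a
        · subst hi; simp [hga, hfa]
        · simp [hgi i hi, hi]
      rw [hzc]
      simp only
      rw [this, Finset.card_insert_of_notMem hmem, Nat.odd_add_one]
  -- the flipping involution
  have flipinv : Function.Involutive (fun f : γ → Bool => Function.update f a (!f a)) := by
    intro f
    funext i
    by_cases hi : i = a
    · subst hi; simp [Function.update_self]
    · simp [Function.update_of_ne hi]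
  let e : (γ → Bool) ≃ (γ → Bool) := flipinv.toPerm _
  have he : ∀ f, e f = Function.update f a (!f a) := fun f => rfl
  let E : {f : γ → Bool // Odd (zc f)} ≃ {f : γ → Bool // ¬ Odd (zc f)} :=
    e.subtypeEquiv (fun f => by rw [he, key f]; tauto)
  have h1 : Nat.card {f : γ → Bool // Odd (zc f)}
      = Nat.card {f : γ → Bool // ¬ Odd (zc f)} := Nat.card_congr E
  have h3 : Fintype.card (γ → Bool) = 2 ^ Fintype.card γ := by
    simp
  have h2 : Nat.card {f : γ → Bool // ¬ Odd (zc f)}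
      = 2 ^ Fintype.card γ - Nat.card {f : γ → Bool // Odd (zc f)} := by
    simp only [Nat.card_eq_fintype_card]
    rw [Fintype.card_subtype_compl, h3]
  have h4 : Nat.card {f : γ → Bool // Odd (zc f)} ≤ 2 ^ Fintype.card γ := by
    simp only [Nat.card_eq_fintype_card]
    rw [← h3]
    exact Fintype.card_subtype_le _
  have h5 : 2 ^ Fintype.card γ = 2 ^ (Fintype.card γ - 1) * 2 := by
    rw [← pow_succ]
    congr 1
    have : 1 ≤ Fintype.card γ := Fintype.card_pos
    omega
  generalize hA : Nat.card {f : γ → Bool // Odd (zc f)} = A at h1 h2 h4 ⊢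
  generalize hB : Nat.card {f : γ → Bool // ¬ Odd (zc f)} = B at h1 h2
  generalize hX : 2 ^ Fintype.card γ = X at h2 h4 h5
  generalize hY : 2 ^ (Fintype.card γ - 1) = Y at h5 ⊢
  omega

section fixedpoints

variable (n : ℕ) [NeZero n] (k : ZMod n)

local notation "Q" => ZMod n ⧸ AddSubgroup.zmultiples k

lemma fiber_card (q : Q) :
    (Finset.univ.filter
      (fun i : ZMod n => (QuotientAddGroup.mk i : Q) = q)).card = addOrderOf k := by
  classical
  rw [← Fintype.card_subtype]
  have E : {i : ZMod n // (QuotientAddGroup.mk i : Q) = q} ≃ AddSubgroup.zmultiples k :=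
    { toFun := fun i => ⟨i.1 - Quotient.out q, by
        have h : (QuotientAddGroup.mk i.1 : Q) = QuotientAddGroup.mk (Quotient.out q) := by
          rw [i.2]
          exact (QuotientAddGroup.out_eq' q).symm
        exact (QuotientAddGroup.eq_iff_sub_mem).mp h⟩
      invFun := fun h => ⟨h.1 + Quotient.out q, by
        rw [← QuotientAddGroup.out_eq' q]
        apply (QuotientAddGroup.eq_iff_sub_mem).mpr
        simpa using h.2⟩
      left_inv := fun i => by ext; simp
      right_inv := fun h => by ext; simp }
  rw [Fintype.card_congr E, ← Nat.card_eq_fintype_card, Nat.card_zmultiples]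

lemma zeros_mul (s : ZMod n → Bool)
    (hconst : ∀ i j : ZMod n,
      (QuotientAddGroup.mk i : Q) = QuotientAddGroup.mk j → s i = s j) :
    (Finset.univ.filter (fun i => s i = false)).card
      = addOrderOf k *
        (Finset.univ.filter (fun q : Q => s (Quotient.out q) = false)).card := by
  classical
  rw [Finset.card_eq_sum_card_fiberwise
    (f := fun i : ZMod n => (QuotientAddGroup.mk i : Q)) (t := Finset.univ) (fun x _ => mem_univ _)]
  have step : ∀ q : Q,
      ((Finset.univ.filter (fun i => s i = false)).filter
        (fun i : ZMod n => (QuotientAddGroup.mk i : Q) = q)).card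
      = if s (Quotient.out q) = false then addOrderOf k else 0 := by
    intro q
    by_cases hq : s (Quotient.out q) = false
    · rw [if_pos hq, ← fiber_card n k q]
      congr 1
      ext i
      simp only [Finset.mem_filter, Finset.mem_univ, true_and]
      constructor
      · rintro ⟨-, h2⟩; exact h2
      · intro h
        refine ⟨?_, h⟩
        rw [hconst i (Quotient.out q) (by rw [h, QuotientAddGroup.out_eq'])]
        exact hq
    · rw [if_neg hq]
      rw [Finset.card_eq_zero]
      ext i
      simp only [Finset.mem_filter, Finset.mem_univ, true_and, Finset.notMem_empty,
        iff_false, not_and]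
      intro h1 h2
      apply hq
      rw [← hconst i (Quotient.out q) (by rw [h2, QuotientAddGroup.out_eq'])]
      exact h1
  calc ∑ q : Q, ((Finset.univ.filter (fun i => s i = false)).filter
        (fun i : ZMod n => (QuotientAddGroup.mk i : Q) = q)).card
      = ∑ q : Q, if s (Quotient.out q) = false then addOrderOf k else 0 := by
        exact Finset.sum_congr rfl (fun q _ => step q)
    _ = ∑ q ∈ Finset.univ.filter (fun q : Q => s (Quotient.out q) = false), addOrderOf k := by
        rw [Finset.sum_filter]
    _ = _ := by rw [Finset.sum_const, smul_eq_mul, mul_comm]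

lemma const_of_fixed (s : ZMod n → Bool) (hs : ∀ i, s (i + k) = s i) :
    ∀ i j : ZMod n, (QuotientAddGroup.mk i : Q) = QuotientAddGroup.mk j → s i = s j := by
  have hs' : ∀ i, s (i - k) = s i := by
    intro i
    have := hs (i - k)
    rw [sub_add_cancel] at this
    exact this.symm
  have hm : ∀ (m : ℤ) (j : ZMod n), s (j + m • k) = s j := by
    intro m
    induction m using Int.induction_on with
    | zero => intro j; simp
    | succ m ih =>
        intro j
        have h1 : j + ((m : ℤ) + 1) • k = (j + (m : ℤ) • k) + k := by
          rw [add_smul, one_smul]; ring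
        rw [h1, hs, ih]
    | pred m ih =>
        intro j
        have h1 : j + (-(m : ℤ) - 1) • k = (j + (-(m : ℤ)) • k) - k := by
          rw [sub_smul, one_smul]; ring
        rw [h1, hs', ih]
  intro i j hij
  obtain ⟨m, hmk⟩ := AddSubgroup.mem_zmultiples_iff.mp
    ((QuotientAddGroup.eq_iff_sub_mem).mp hij)
  have : i = j + m • k := by rw [hmk]; ring
  rw [this, hm]

end fixedpoints

lemma card_fixedBy_eq (n : ℕ) [NeZero n] (k : ZMod n) :
    Nat.card (AddAction.fixedBy
      {s : ZMod n → Bool // Odd (Finset.univ.filter (fun i => s i = false)).card} k)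
      = if Odd (addOrderOf k) then 2 ^ (n / addOrderOf k - 1) else 0 := by
  classical
  have hdpos : 0 < addOrderOf k := addOrderOf_pos k
  have hdn : addOrderOf k ∣ n := by
    have := addOrderOf_dvd_card (x := k)
    rwa [ZMod.card] at this
  have hQ : Fintype.card (ZMod n ⧸ AddSubgroup.zmultiples k) = n / addOrderOf k := by
    have h := AddSubgroup.card_eq_card_quotient_mul_card_addSubgroup
      (AddSubgroup.zmultiples k)
    rw [Nat.card_zmultiples, Nat.card_eq_fintype_card, ZMod.card,
      Nat.card_eq_fintype_card] at h
    exact (Nat.div_eq_of_eq_mul_left hdpos h).symm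
  have hfix_prop : ∀ x : AddAction.fixedBy
      {s : ZMod n → Bool // Odd (Finset.univ.filter (fun i => s i = false)).card} k,
      ∀ i, x.1.1 (i + k) = x.1.1 i := by
    intro x i
    have hfix : k +ᵥ x.1 = x.1 := AddAction.mem_fixedBy.mp x.2
    exact congrFun (congrArg Subtype.val hfix) i
  by_cases h : Odd (addOrderOf k)
  · rw [if_pos h]
    have E : AddAction.fixedBy
        {s : ZMod n → Bool // Odd (Finset.univ.filter (fun i => s i = false)).card} k
        ≃ {f : ZMod n ⧸ AddSubgroup.zmultiples k → Bool //
            Odd (Finset.univ.filter (fun q => f q = false)).card} :=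
      { toFun := fun x => ⟨fun q => x.1.1 (Quotient.out q), by
          have hz := zeros_mul n k x.1.1 (const_of_fixed n k x.1.1 (hfix_prop x))
          have hodd := x.1.2
          rw [hz, Nat.odd_mul] at hodd
          exact hodd.2⟩
        invFun := fun f => ⟨⟨fun i => f.1 (QuotientAddGroup.mk i), by
            have hz := zeros_mul n k (fun i => f.1 (QuotientAddGroup.mk i))
              (fun i j hij => by rw [hij])
            rw [hz]
            have heq : (Finset.univ.filter
                (fun q : ZMod n ⧸ AddSubgroup.zmultiples k =>
                  f.1 (QuotientAddGroup.mk (Quotient.out q)) = false))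
                = Finset.univ.filter (fun q => f.1 q = false) := by
              apply Finset.filter_congr
              intro q _
              rw [QuotientAddGroup.out_eq']
            rw [heq, Nat.odd_mul]
            exact ⟨h, f.2⟩⟩, by
          apply AddAction.mem_fixedBy.mpr
          apply Subtype.ext
          funext i
          show f.1 (QuotientAddGroup.mk (i + k)) = f.1 (QuotientAddGroup.mk i)
          exact congrArg f.1 ((QuotientAddGroup.eq_iff_sub_mem).mpr
            (by simpa using AddSubgroup.mem_zmultiples k))⟩
        left_inv := fun x => by
          apply Subtype.ext
          apply Subtype.ext
          funext i
          show x.1.1 (Quotient.out (QuotientAddGroup.mk i)) = x.1.1 i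
          exact const_of_fixed n k x.1.1 (hfix_prop x) _ i
            (QuotientAddGroup.out_eq' (QuotientAddGroup.mk i))
        right_inv := fun f => by
          apply Subtype.ext
          funext q
          exact congrArg f.1 (QuotientAddGroup.out_eq' q) }
    rw [Nat.card_congr E, card_odd_bool, hQ]
  · rw [if_neg h]
    have : IsEmpty (AddAction.fixedBy
        {s : ZMod n → Bool // Odd (Finset.univ.filter (fun i => s i = false)).card} k) := by
      constructor
      intro x
      have hz := zeros_mul n k x.1.1 (const_of_fixed n k x.1.1 (hfix_prop x))
      have hodd := x.1.2
      rw [hz, Nat.odd_mul] at hodd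
      exact h hodd.1
    exact Nat.card_of_isEmpty

theorem card_oddZeroNecklaces (n : ℕ) [NeZero n] :
    Nat.card (Quotient (oddZeroNecklaceSetoid n)) * (2 * n)
      = ∑ d ∈ n.divisors.filter (fun d => Odd d), d.totient * 2 ^ (n / d) := by
  classical
  rw [oddZeroNecklaceSetoid_eq]
  have hB := AddAction.sum_card_fixedBy_eq_card_orbits_mul_card_addGroup (ZMod n)
    {s : ZMod n → Bool // Odd (Finset.univ.filter (fun i => s i = false)).card}
  rw [ZMod.card] at hB
  have hL : Nat.card (Quotient (AddAction.orbitRel (ZMod n)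
        {s : ZMod n → Bool // Odd (Finset.univ.filter (fun i => s i = false)).card})) * (2 * n)
      = 2 * ∑ k : ZMod n, Nat.card (AddAction.fixedBy
        {s : ZMod n → Bool // Odd (Finset.univ.filter (fun i => s i = false)).card} k) := by
    rw [Nat.card_eq_fintype_card]
    have : ∑ k : ZMod n, Nat.card (AddAction.fixedBy
        {s : ZMod n → Bool // Odd (Finset.univ.filter (fun i => s i = false)).card} k)
        = ∑ k : ZMod n, Fintype.card (AddAction.fixedBy
        {s : ZMod n → Bool // Odd (Finset.univ.filter (fun i => s i = false)).card} k) :=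
      Finset.sum_congr rfl fun k _ => Nat.card_eq_fintype_card
    rw [this, hB]
    ring
  rw [hL]
  have hsum : ∑ k : ZMod n, Nat.card (AddAction.fixedBy
        {s : ZMod n → Bool // Odd (Finset.univ.filter (fun i => s i = false)).card} k)
      = ∑ d ∈ n.divisors,
          d.totient * (if Odd d then 2 ^ (n / d - 1) else 0) := by
    have hmaps : ∀ k : ZMod n, k ∈ Finset.univ → addOrderOf k ∈ n.divisors := by
      intro k _
      rw [Nat.mem_divisors]
      refine ⟨?_, NeZero.ne n⟩
      have := addOrderOf_dvd_card (x := k)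
      rwa [ZMod.card] at this
    rw [← Finset.sum_fiberwise_of_maps_to hmaps]
    apply Finset.sum_congr rfl
    intro d hd
    have hstep : ∑ k ∈ Finset.univ.filter (fun k : ZMod n => addOrderOf k = d),
        Nat.card (AddAction.fixedBy
        {s : ZMod n → Bool // Odd (Finset.univ.filter (fun i => s i = false)).card} k)
        = ∑ k ∈ Finset.univ.filter (fun k : ZMod n => addOrderOf k = d),
          (if Odd d then 2 ^ (n / d - 1) else 0) := by
      apply Finset.sum_congr rfl
      intro k hk
      rw [Finset.mem_filter] at hk
      rw [card_fixedBy_eq, hk.2]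
    rw [hstep, Finset.sum_const, smul_eq_mul]
    congr 1
    have hdvd : d ∣ Fintype.card (ZMod n) := by
      rw [ZMod.card]
      exact (Nat.mem_divisors.mp hd).1
    exact IsAddCyclic.card_addOrderOf_eq_totient hdvd
  rw [hsum, Finset.mul_sum]
  rw [Finset.sum_filter]
  apply Finset.sum_congr rfl
  intro d hd
  by_cases ho : Odd d
  · rw [if_pos ho, if_pos ho]
    have h1 : 1 ≤ n / d := by
      obtain ⟨hdvd, hne⟩ := Nat.mem_divisors.mp hd
      have : 0 < d := Nat.pos_of_dvd_of_pos hdvd (Nat.pos_of_ne_zero hne)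
      exact Nat.div_pos (Nat.le_of_dvd (Nat.pos_of_ne_zero hne) hdvd) this
    have h2 : 2 ^ (n / d) = 2 * 2 ^ (n / d - 1) := by
      rw [← pow_succ']
      congr 1
      exact (Nat.succ_pred_eq_of_pos h1).symm
    rw [h2]
    ring
  · rw [if_neg ho, if_neg ho]
    ring
end

section
/- The number of binary necklaces of length $n$ with an odd number of zeros is at least $2^{n-1}/n$, with equality if and only if $n$ is a power of $2$. -/
namespace OddNecklaceAux

open Finset

def zeros {n : ℕ} [NeZero n] (s : ZMod n → Bool) : Finset (ZMod n) :=
  univ.filter (fun i => s i = false)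

def rot {n : ℕ} (s : ZMod n → Bool) (k : ZMod n) : ZMod n → Bool := fun i => s (i + k)

abbrev OddSeq (n : ℕ) [NeZero n] :=
  {s : ZMod n → Bool // Odd (Finset.univ.filter (fun i => s i = false)).card}

lemma update_update {n : ℕ} [NeZero n] (s : ZMod n → Bool) :
    Function.update (Function.update s 0 (!s 0)) 0 (!(Function.update s 0 (!s 0)) 0) = s := by
  funext i
  by_cases hi : i = 0 <;> simp [hi, Function.update]

lemma zeros_update {n : ℕ} [NeZero n] (s : ZMod n → Bool) :
    Odd (zeros (Function.update s 0 (!s 0))).card ↔ ¬ Odd (zeros s).card := by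
  set t := Function.update s 0 (!s 0) with ht
  have h0 : t 0 = !s 0 := Function.update_self _ _ _
  have hne : ∀ i : ZMod n, i ≠ 0 → t i = s i := fun i hi => Function.update_of_ne hi _ _
  by_cases hs : s 0 = false
  · have hzz : zeros s = insert 0 (zeros t) := by
      ext i
      by_cases hi : i = 0
      · subst hi; simp [zeros, hs]
      · simp [zeros, hi, hne i hi]
    have h0t : (0 : ZMod n) ∉ zeros t := by simp [zeros, h0, hs]
    rw [hzz, Finset.card_insert_of_notMem h0t, Nat.odd_iff, Nat.odd_iff]
    omega
  · have hs' : s 0 = true := by simpa using hs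
    have hzz : zeros t = insert 0 (zeros s) := by
      ext i
      by_cases hi : i = 0
      · subst hi; simp [zeros, h0, hs']
      · simp [zeros, hi, hne i hi]
    have h0s : (0 : ZMod n) ∉ zeros s := by simp [zeros, hs']
    rw [hzz, Finset.card_insert_of_notMem h0s, Nat.odd_iff, Nat.odd_iff]
    omega

lemma card_oddSeq {n : ℕ} [NeZero n] : Fintype.card (OddSeq n) = 2 ^ (n - 1) := by
  classical
  rw [Fintype.card_subtype]
  set A := univ.filter (fun s : ZMod n → Bool => Odd (zeros s).card) with hA
  set B := univ.filter (fun s : ZMod n → Bool => ¬ Odd (zeros s).card) with hB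
  have hAB : A.card + B.card = 2 ^ n := by
    rw [hA, hB, Finset.card_filter_add_card_filter_not]
    simp [Fintype.card_fun]
  have hcards : A.card = B.card := by
    apply Finset.card_bij' (fun s _ => Function.update s 0 (!s 0))
      (fun s _ => Function.update s 0 (!s 0))
    case left_inv => intro s _; exact update_update s
    case right_inv => intro s _; exact update_update s
    case hi =>
      intro s hs
      simp only [hA, hB, mem_filter, mem_univ, true_and] at hs ⊢
      rw [zeros_update]; exact fun h => h hs
    case hj =>
      intro s hs
      simp only [hA, hB, mem_filter, mem_univ, true_and] at hs ⊢
      exact (zeros_update s).mpr hs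
  have hn : 1 ≤ n := Nat.one_le_iff_ne_zero.mpr (NeZero.ne n)
  have h2 : 2 ^ n = 2 ^ (n - 1) * 2 := by
    rw [← pow_succ]; congr 1; omega
  have hAcard : A.card = 2 ^ (n-1) := by omega
  rw [← hAcard, hA]
  rfl

lemma zeros_rot_card {n : ℕ} [NeZero n] (s : ZMod n → Bool) (k : ZMod n) :
    (zeros (rot s k)).card = (zeros s).card := by
  apply Finset.card_bij' (fun i _ => i + k) (fun j _ => j - k)
  case left_inv => intro i _; ring
  case right_inv => intro j _; ring
  case hi => intro i hi; simp only [zeros, mem_filter, mem_univ, true_and] at hi ⊢; exact hi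
  case hj =>
    intro j hj
    simp only [zeros, mem_filter, mem_univ, true_and] at hj ⊢
    show s (j - k + k) = false; rw [sub_add_cancel]; exact hj

def rotS {n : ℕ} [NeZero n] (s : OddSeq n) (k : ZMod n) : OddSeq n :=
  ⟨rot s.val k, by have := zeros_rot_card s.val k; unfold zeros at this; rw [this]; exact s.2⟩

lemma rotS_equiv {n : ℕ} [NeZero n] (s : OddSeq n) (k : ZMod n) :
    (oddZeroNecklaceSetoid n).r s (rotS s k) := ⟨k, fun _ => rfl⟩

lemma surj_fiber {n : ℕ} [NeZero n] (s₀ : OddSeq n) :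
    Function.Surjective (fun k : ZMod n =>
      (⟨rotS s₀ k, Quot.sound ((oddZeroNecklaceSetoid n).iseqv.symm (rotS_equiv s₀ k))⟩ :
        {x : OddSeq n // Quotient.mk (oddZeroNecklaceSetoid n) x =
          Quotient.mk (oddZeroNecklaceSetoid n) s₀})) := by
  rintro ⟨x, hx⟩
  obtain ⟨k, hk⟩ := Quotient.exact hx
  refine ⟨-k, ?_⟩
  ext i
  have h := hk (i + -k)
  rw [show i + -k + k = i by ring] at h
  exact h

lemma period_eq_zero {n : ℕ} [NeZero n] (hn : ∃ a : ℕ, n = 2 ^ a) (s : ZMod n → Bool)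
    (hodd : Odd (zeros s).card) (k : ZMod n) (hk : ∀ i, s (i + k) = s i) : k = 0 := by
  classical
  by_contra hk0
  set m := addOrderOf k with hm
  have hm1 : m ≠ 1 := by
    simp only [hm, Ne, AddMonoid.addOrderOf_eq_one_iff]
    exact hk0
  have hmn : m ∣ n := by
    have h := addOrderOf_dvd_card (x := k)
    rwa [ZMod.card] at h
  obtain ⟨a, ha⟩ := hn
  rw [ha] at hmn
  have hmeven : 2 ∣ m := by
    obtain ⟨i, hi, hmi⟩ := (Nat.dvd_prime_pow Nat.prime_two).mp hmn
    rw [hmi]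
    cases i with
    | zero => rw [hmi] at hm1; simp at hm1
    | succ j => exact dvd_pow_self 2 (Nat.succ_ne_zero j)
  have hinv : ∀ t : ℤ, ∀ i, s (i + t • k) = s i := by
    intro t
    induction t using Int.induction_on with
    | zero => simp
    | succ t ih =>
      intro i
      have h1 : i + ((t : ℤ) + 1) • k = (i + k) + (t : ℤ) • k := by
        rw [add_zsmul, one_zsmul]; ring
      rw [h1, ih (i + k), hk i]
    | pred t ih =>
      intro i
      have h1 : i + (-(t : ℤ) - 1) • k = (i - k) + (-(t : ℤ)) • k := by
        rw [sub_zsmul, one_zsmul]; ring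
      rw [h1, ih (i - k)]
      have h2 := hk (i - k)
      rw [sub_add_cancel] at h2
      exact h2.symm
  set H := AddSubgroup.zmultiples k with hH
  have hinv' : ∀ i : ZMod n, ∀ h ∈ H, s (i + h) = s i := by
    rintro i h hh
    obtain ⟨t, rfl⟩ := AddSubgroup.mem_zmultiples_iff.mp hh
    exact hinv t i
  have hcardH : Fintype.card H = m := by
    rw [← Nat.card_eq_fintype_card, Nat.card_zmultiples]
  have heven : 2 ∣ (zeros s).card := by
    rw [Finset.card_eq_sum_card_fiberwise
      (f := (QuotientAddGroup.mk : ZMod n → ZMod n ⧸ H)) (t := univ) (fun x _ => mem_univ _)]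
    apply Finset.dvd_sum
    intro q _
    set fib := (zeros s).filter (fun i => (QuotientAddGroup.mk i : ZMod n ⧸ H) = q) with hfib
    rcases fib.eq_empty_or_nonempty with he | ⟨i₀, hi₀⟩
    · rw [he]; simp
    · have hi₀' := hi₀
      rw [hfib, mem_filter] at hi₀'
      obtain ⟨hi₀z, hi₀q⟩ := hi₀'
      have hs0 : s i₀ = false := by
        rw [zeros, mem_filter] at hi₀z; exact hi₀z.2
      have key : ∀ i ∈ fib, i - i₀ ∈ H := by
        intro i hi
        rw [hfib, mem_filter] at hi
        have h1 : (QuotientAddGroup.mk i : ZMod n ⧸ H) = QuotientAddGroup.mk i₀ :=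
          hi.2.trans hi₀q.symm
        rw [QuotientAddGroup.eq] at h1
        have h2 := neg_mem h1
        have h3 : -(-i + i₀) = i - i₀ := by ring
        rwa [h3] at h2
      have key2 : ∀ h : H, i₀ + (h : ZMod n) ∈ fib := by
        intro h
        rw [hfib, mem_filter]
        constructor
        · rw [zeros, mem_filter]
          exact ⟨mem_univ _, by rw [hinv' i₀ h h.2, hs0]⟩
        · rw [← hi₀q, QuotientAddGroup.eq]
          have h3 : -(i₀ + (h : ZMod n)) + i₀ = -(h : ZMod n) := by ring
          rw [h3]
          exact neg_mem h.2
      have hcard : fib.card = Fintype.card H := by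
        rw [← Finset.card_univ]
        apply Finset.card_bij' (fun i hi => (⟨i - i₀, key i hi⟩ : H))
          (fun h _ => i₀ + (h : ZMod n))
        case hi => intro i hi; exact mem_univ _
        case hj => intro h _; exact key2 h
        case left_inv => intro i _; ring
        case right_inv =>
          intro h _
          apply Subtype.ext
          show i₀ + (h : ZMod n) - i₀ = (h : ZMod n)
          ring
      rw [hcard, hcardH]
      exact hmeven
  rw [Nat.odd_iff] at hodd
  omega

lemma exists_periodic {n : ℕ} [NeZero n] (hn : ¬ ∃ a : ℕ, n = 2 ^ a) :
    ∃ s : ZMod n → Bool, Odd (zeros s).card ∧ ∃ k : ZMod n, k ≠ 0 ∧ ∀ i, s (i + k) = s i := by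
  classical
  have hn0 : n ≠ 0 := NeZero.ne n
  set q := n / 2 ^ (n.factorization 2) with hqdef
  have hq_dvd : q ∣ n := Nat.ordCompl_dvd n 2
  have hq_odd : ¬ 2 ∣ q := Nat.not_dvd_ordCompl Nat.prime_two hn0
  have hq0 : q ≠ 0 := Nat.ordCompl_pos 2 hn0 |>.ne'
  have hq1 : q ≠ 1 := by
    intro h
    apply hn
    refine ⟨n.factorization 2, ?_⟩
    have h2 := Nat.ordProj_mul_ordCompl_eq_self n 2
    rw [← hqdef, h, mul_one] at h2
    exact h2.symm
  set d := n / q with hddef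
  have hdq : d * q = n := Nat.div_mul_cancel hq_dvd
  have hd0 : 0 < d := by
    rcases Nat.eq_zero_or_pos d with h | h
    · rw [h, zero_mul] at hdq; omega
    · exact h
  have hq2 : 1 < q := Nat.lt_of_le_of_ne (Nat.one_le_iff_ne_zero.mpr hq0) (Ne.symm hq1)
  have hdn : d < n := Nat.div_lt_self (Nat.pos_of_ne_zero hn0) hq2
  have hdvdn : d ∣ n := ⟨q, hdq.symm⟩
  have hnd : n / d = q := by rw [← hdq, Nat.mul_div_cancel_left q hd0]
  set s : ZMod n → Bool := fun i => !(decide (d ∣ i.val)) with hs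
  have hzeros : zeros s = univ.filter (fun i : ZMod n => d ∣ i.val) := by
    apply Finset.filter_congr
    intro i _
    simp [hs]
  have hcount : (zeros s).card = q := by
    rw [hzeros, ← Finset.card_range q]
    apply Finset.card_bij' (fun i _ => i.val / d) (fun j _ => ((j * d : ℕ) : ZMod n))
    case hi =>
      intro i hi
      rw [Finset.mem_range, ← hnd]
      exact Nat.div_lt_div_of_lt_of_dvd hdvdn (ZMod.val_lt i)
    case hj =>
      intro j hj
      rw [Finset.mem_range] at hj
      rw [mem_filter]
      have hlt : j * d < n := by
        calc j * d < q * d := (Nat.mul_lt_mul_right hd0).mpr hj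
        _ = n := by rw [mul_comm]; exact hdq
      refine ⟨mem_univ _, ?_⟩
      rw [ZMod.val_natCast_of_lt hlt]
      exact dvd_mul_left d j
    case left_inv =>
      intro i hi
      rw [mem_filter] at hi
      rw [Nat.div_mul_cancel hi.2, ZMod.natCast_val, ZMod.cast_id]
    case right_inv =>
      intro j hj
      rw [Finset.mem_range] at hj
      have hlt : j * d < n := by
        calc j * d < q * d := (Nat.mul_lt_mul_right hd0).mpr hj
        _ = n := by rw [mul_comm]; exact hdq
      rw [ZMod.val_natCast_of_lt hlt, Nat.mul_div_cancel j hd0]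
  refine ⟨s, ?_, (d : ZMod n), ?_, ?_⟩
  · rw [hcount]
    exact Nat.odd_iff.mpr (by omega)
  · intro h0
    have hv := ZMod.val_natCast_of_lt hdn
    rw [h0, ZMod.val_zero] at hv
    omega
  · intro i
    have hvald : ((d : ZMod n)).val = d := ZMod.val_natCast_of_lt hdn
    have hval : (i + (d : ZMod n)).val = (i.val + d) % n := by
      rw [ZMod.val_add, hvald]
    have hiff : d ∣ (i + (d : ZMod n)).val ↔ d ∣ i.val := by
      rw [hval, Nat.dvd_mod_iff hdvdn, Nat.dvd_add_self_right]
    show (!decide (d ∣ (i + (d : ZMod n)).val)) = !decide (d ∣ i.val)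
    rw [decide_eq_decide.mpr hiff]

end OddNecklaceAux

open OddNecklaceAux Finset

theorem card_oddZeroNecklaces_lower_bound (n : ℕ) [NeZero n] :
    (2 ^ (n - 1) : ℚ) / n ≤ (Nat.card (Quotient (oddZeroNecklaceSetoid n)) : ℚ) ∧
    ((Nat.card (Quotient (oddZeroNecklaceSetoid n)) : ℚ) = (2 ^ (n - 1) : ℚ) / n ↔
      ∃ k : ℕ, n = 2 ^ k) := by
  classical
  haveI : Fintype (Quotient (oddZeroNecklaceSetoid n)) := Fintype.ofFinite _
  rw [Nat.card_eq_fintype_card]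
  set N := Fintype.card (Quotient (oddZeroNecklaceSetoid n)) with hN
  set mk : OddSeq n → Quotient (oddZeroNecklaceSetoid n) := Quotient.mk (oddZeroNecklaceSetoid n) with hmk
  have hsum : 2 ^ (n - 1) = ∑ q : Quotient (oddZeroNecklaceSetoid n), (univ.filter (fun s : OddSeq n => mk s = q)).card := by
    rw [← card_oddSeq (n := n), ← Finset.card_univ]
    exact Finset.card_eq_sum_card_fiberwise (fun x _ => mem_univ _)
  have hfibcard : ∀ q : Quotient (oddZeroNecklaceSetoid n),
      (univ.filter (fun s : OddSeq n => mk s = q)).card = Fintype.card {x : OddSeq n // mk x = q} :=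
    fun q => (Fintype.card_subtype _).symm
  have hle : ∀ q : Quotient (oddZeroNecklaceSetoid n), (univ.filter (fun s : OddSeq n => mk s = q)).card ≤ n := by
    intro q
    obtain ⟨s₀, rfl⟩ := q.exists_rep
    rw [hfibcard]
    have h := Fintype.card_le_of_surjective _ (surj_fiber s₀)
    rwa [ZMod.card] at h
  -- general bound
  have h1 : 2 ^ (n - 1) ≤ n * N := by
    rw [hsum]
    calc ∑ q : Quotient (oddZeroNecklaceSetoid n), (univ.filter (fun s : OddSeq n => mk s = q)).card
        ≤ ∑ _q : Quotient (oddZeroNecklaceSetoid n), n := Finset.sum_le_sum (fun q _ => hle q)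
      _ = N * n := by rw [Finset.sum_const, Finset.card_univ, smul_eq_mul]
      _ = n * N := mul_comm _ _
  -- equality when power of two
  have h2 : (∃ a : ℕ, n = 2 ^ a) → 2 ^ (n - 1) = n * N := by
    intro hpow
    have hfib : ∀ q : Quotient (oddZeroNecklaceSetoid n), (univ.filter (fun s : OddSeq n => mk s = q)).card = n := by
      intro q
      obtain ⟨s₀, rfl⟩ := q.exists_rep
      rw [hfibcard]
      have hinj : Function.Injective (fun k : ZMod n =>
          (⟨rotS s₀ k, Quot.sound ((oddZeroNecklaceSetoid n).iseqv.symm (rotS_equiv s₀ k))⟩ :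
            {x : OddSeq n // mk x = mk s₀})) := by
        intro k k' heq
        have hval : ∀ i, s₀.val (i + k) = s₀.val (i + k') :=
          fun i => congrFun (congrArg (fun x => (Subtype.val (Subtype.val x))) heq) i
        have hper : ∀ i, s₀.val (i + (k - k')) = s₀.val i := by
          intro i
          have h := hval (i - k')
          rw [show i - k' + k = i + (k - k') by ring, show i - k' + k' = i by ring] at h
          exact h
        have := period_eq_zero hpow s₀.val s₀.2 (k - k') hper
        have : k - k' = 0 := this
        linear_combination this
      have hbij : Function.Bijective (fun k : ZMod n =>
          (⟨rotS s₀ k, Quot.sound ((oddZeroNecklaceSetoid n).iseqv.symm (rotS_equiv s₀ k))⟩ :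
            {x : OddSeq n // mk x = mk s₀})) := ⟨hinj, surj_fiber s₀⟩
      rw [← Fintype.card_of_bijective hbij, ZMod.card]
    rw [hsum]
    calc ∑ q : Quotient (oddZeroNecklaceSetoid n), (univ.filter (fun s : OddSeq n => mk s = q)).card
        = ∑ _q : Quotient (oddZeroNecklaceSetoid n), n := Finset.sum_congr rfl (fun q _ => hfib q)
      _ = N * n := by rw [Finset.sum_const, Finset.card_univ, smul_eq_mul]
      _ = n * N := mul_comm _ _
  -- strict when not power of two
  have h3 : (¬ ∃ a : ℕ, n = 2 ^ a) → 2 ^ (n - 1) < n * N := by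
    intro hpow
    obtain ⟨s, hodd, k, hk0, hk⟩ := exists_periodic hpow
    set s₀ : OddSeq n := ⟨s, hodd⟩ with hs₀
    have hnotinj : ¬ Function.Injective (fun k : ZMod n =>
        (⟨rotS s₀ k, Quot.sound ((oddZeroNecklaceSetoid n).iseqv.symm (rotS_equiv s₀ k))⟩ :
          {x : OddSeq n // mk x = mk s₀})) := by
      intro hinj
      apply hk0
      apply hinj
      apply Subtype.ext
      apply Subtype.ext
      funext i
      show s (i + k) = s (i + 0)
      rw [add_zero, hk i]
    have hlt : (univ.filter (fun x : OddSeq n => mk x = mk s₀)).card < n := by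
      rw [hfibcard]
      have h := Fintype.card_lt_of_surjective_not_injective _ (surj_fiber s₀) hnotinj
      rwa [ZMod.card] at h
    rw [hsum]
    calc ∑ q : Quotient (oddZeroNecklaceSetoid n), (univ.filter (fun s : OddSeq n => mk s = q)).card
        < ∑ _q : Quotient (oddZeroNecklaceSetoid n), n :=
          Finset.sum_lt_sum (fun q _ => hle q) ⟨mk s₀, mem_univ _, hlt⟩
      _ = N * n := by rw [Finset.sum_const, Finset.card_univ, smul_eq_mul]
      _ = n * N := mul_comm _ _
  -- rational conclusions
  have hn0 : (0 : ℚ) < n := by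
    have := Nat.pos_of_ne_zero (NeZero.ne n)
    exact_mod_cast this
  constructor
  · rw [div_le_iff₀ hn0]
    have := (Nat.cast_le (α := ℚ)).mpr h1
    push_cast at this
    linarith
  · constructor
    · intro heq
      by_contra hpow
      have h3' := h3 hpow
      rw [eq_div_iff hn0.ne'] at heq
      have : ((N * n : ℕ) : ℚ) = ((2 ^ (n - 1) : ℕ) : ℚ) := by push_cast; linarith
      have hnat : N * n = 2 ^ (n - 1) := Nat.cast_injective this
      rw [mul_comm] at hnat
      omega
    · intro hpow
      have h2' := h2 hpow
      rw [eq_div_iff hn0.ne']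
      have : ((N * n : ℕ) : ℚ) = ((2 ^ (n - 1) : ℕ) : ℚ) := by
        rw [show N * n = 2 ^ (n - 1) by rw [mul_comm]; exact h2'.symm]
      push_cast at this
      linarith
end

section
/- Let $A$ be the $n\times n$ cyclic-form matrix with diagonal $1$'s and entries $a_1,\dots,a_n$ (corner $A_{1,n}=a_1$, subdiagonal $A_{i,i-1}=a_i$), let $\tilde A$ be its adjugate matrix (so $A\tilde A=(\det A)E_n$), and suppose $\det A = 0$. If the system $\tilde A\mathbf{x}=\mathbf{1}$ has an integer solution $\mathbf{b}$, then $a_i=-1$ for all $i=1,\dots,n$. -/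
theorem all_entries_neg_one_of_det_zero (n : ℕ) (hn : 2 ≤ n) (a : Fin n → ℤ)
    (hdet : (cycMat n a).det = 0) (b : Fin n → ℤ)
    (hb : (cycMat n a).adjugate.mulVec b = fun _ => 1) :
    ∀ i, a i = -1 := by
  have hnz : NeZero n := ⟨by omega⟩
  have hone : ((1 : Fin n) : ℕ) = 1 := by
    rw [Fin.val_one']; exact Nat.mod_eq_of_lt (by omega)
  have hA : (cycMat n a).mulVec (fun _ => 1) = 0 := by
    have h1 : (cycMat n a).mulVec ((cycMat n a).adjugate.mulVec b) = 0 := by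
      rw [Matrix.mulVec_mulVec, Matrix.mul_adjugate, hdet, zero_smul,
        Matrix.zero_mulVec]
    rwa [hb] at h1
  intro i
  have h2 := congrFun hA i
  have key : ∀ j : Fin n, cycMat n a i j =
      (if j = i then (1:ℤ) else 0) + (if j = i - 1 then a i else 0) := by
    intro j
    have hcond : ((i : ℕ) = ((j : ℕ) + 1) % n) ↔ j = i - 1 := by
      have hv : ((j + 1 : Fin n) : ℕ) = ((j : ℕ) + 1) % n := by
        rw [Fin.add_def, hone]
      rw [eq_sub_iff_add_eq]
      constructor
      · intro h; exact Fin.ext (by rw [hv, ← h])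
      · intro h; rw [← h, hv]
    have hne : i - 1 ≠ i := by
      intro h
      have h0 : (1 : Fin n) = 0 := sub_eq_self.mp h
      have := congrArg Fin.val h0
      rw [hone] at this; simp at this
    simp only [cycMat, Matrix.of_apply]
    by_cases h : i = j
    · subst h
      simp [hne.symm, Ne.symm hne]
    · rw [if_neg h, if_neg (Ne.symm h)]
      by_cases h2 : j = i - 1
      · rw [if_pos (hcond.mpr h2), if_pos h2, zero_add]
      · rw [if_neg (fun hc => h2 (hcond.mp hc)), if_neg h2, zero_add]
  have h3 : (cycMat n a).mulVec (fun _ => 1) i = 1 + a i := by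
    simp only [Matrix.mulVec, dotProduct, mul_one]
    rw [Finset.sum_congr rfl (fun j _ => key j), Finset.sum_add_distrib,
      Finset.sum_ite_eq', Finset.sum_ite_eq']
    simp
  rw [h3] at h2
  have h4 : (0 : Fin n → ℤ) i = 0 := rfl
  rw [h4] at h2
  linarith
end

section
/- Let $n\ge 4$ and $p$ an odd prime. Suppose integers $r_1,\dots,r_n$ satisfy $2r_1(r_n+r_1)\equiv 0\pmod p$, $r_i(2r_{i-1}+r_i)\equiv 0\pmod p$ for $2\le i\le n$, $2r_ir_j\equiv 0\pmod p$ for all $(i,j)$ with $i-j\ge 2$ and $(i,j)\ne(n,1)$, and $\gcd(r_1,\dots,r_n)=1$. Then a contradiction follows; i.e., no such integers exist. -/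
theorem type3_congruence_system_no_solution (n : ℕ) (hn : 4 ≤ n) (p : ℕ)
    (hp : p.Prime) (hpodd : Odd p) (r : ℕ → ℤ)
    (hgcd : Finset.gcd (Finset.Icc 1 n) r = 1)
    (h1 : (p : ℤ) ∣ 2 * r 1 * (r n + r 1))
    (h2 : ∀ i, 2 ≤ i → i ≤ n → (p : ℤ) ∣ r i * (2 * r (i - 1) + r i))
    (h3 : ∀ i j, i ≤ n → 1 ≤ j → j + 2 ≤ i → (i, j) ≠ (n, 1) → (p : ℤ) ∣ 2 * r i * r j) :
    False := by
  haveI : Fact p.Prime := ⟨hp⟩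
  have hp2 : p ≠ 2 := by
    rintro rfl
    exact (by decide : ¬ Odd 2) hpodd
  have h2ne : (2 : ZMod p) ≠ 0 := by
    intro h
    have h2' : ((2 : ℕ) : ZMod p) = 0 := by exact_mod_cast h
    have : p ∣ 2 := (ZMod.natCast_eq_zero_iff 2 p).mp h2'
    exact hp2 ((Nat.prime_dvd_prime_iff_eq hp Nat.prime_two).mp this)
  -- translate hypotheses into ZMod p
  have hA : (r 1 : ZMod p) * ((r n : ZMod p) + (r 1 : ZMod p)) = 0 := by
    have h0 : ((2 * r 1 * (r n + r 1) : ℤ) : ZMod p) = 0 :=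
      (ZMod.intCast_zmod_eq_zero_iff_dvd _ p).mpr h1
    push_cast at h0
    rw [mul_assoc] at h0
    rcases mul_eq_zero.mp h0 with h | h
    · exact absurd h h2ne
    · exact h
  have hB : ∀ i, 2 ≤ i → i ≤ n →
      (r i : ZMod p) * (2 * (r (i - 1) : ZMod p) + (r i : ZMod p)) = 0 := by
    intro i hi hi'
    have h0 : ((r i * (2 * r (i - 1) + r i) : ℤ) : ZMod p) = 0 :=
      (ZMod.intCast_zmod_eq_zero_iff_dvd _ p).mpr (h2 i hi hi')
    push_cast at h0
    exact h0
  have hC : ∀ i j, i ≤ n → 1 ≤ j → j + 2 ≤ i → (i, j) ≠ (n, 1) →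
      (r i : ZMod p) * (r j : ZMod p) = 0 := by
    intro i j ha hb hc hd
    have h0 : ((2 * r i * r j : ℤ) : ZMod p) = 0 :=
      (ZMod.intCast_zmod_eq_zero_iff_dvd _ p).mpr (h3 i j ha hb hc hd)
    push_cast at h0
    rw [mul_assoc] at h0
    rcases mul_eq_zero.mp h0 with h | h
    · exact absurd h h2ne
    · exact h
  -- some r k is nonzero mod p
  have hex : ∃ k, 1 ≤ k ∧ k ≤ n ∧ (r k : ZMod p) ≠ 0 := by
    by_contra h
    push_neg at h
    have hdvd : (p : ℤ) ∣ 1 := by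
      rw [← hgcd]
      refine Finset.dvd_gcd fun i hi => ?_
      rw [Finset.mem_Icc] at hi
      exact (ZMod.intCast_zmod_eq_zero_iff_dvd _ p).mp (h i hi.1 hi.2)
    have : p ∣ 1 := by exact_mod_cast hdvd
    exact hp.one_lt.ne' (Nat.dvd_one.mp this)
  obtain ⟨k, hk1, hkn, hknz⟩ := hex
  by_cases hkeq1 : k = 1
  · subst hkeq1
    -- r (n-1) ≡ 0
    have hn1 : (r (n - 1) : ZMod p) = 0 := by
      have h0 := hC (n - 1) 1 (by omega) le_rfl (by omega)
        (by simp only [Ne, Prod.mk.injEq]; omega)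
      rcases mul_eq_zero.mp h0 with h | h
      · exact h
      · exact absurd h hknz
    -- r n ≡ 0
    have hnn : (r n : ZMod p) = 0 := by
      have h0 := hB n (by omega) le_rfl
      rw [hn1] at h0
      simp only [mul_zero, zero_add] at h0
      exact mul_self_eq_zero.mp h0
    rw [hnn, zero_add] at hA
    exact hknz (mul_self_eq_zero.mp hA)
  · by_cases hkeq2 : k = 2
    · subst hkeq2
      -- r n ≡ 0
      have hnn : (r n : ZMod p) = 0 := by
        have h0 := hC n 2 le_rfl (by omega) (by omega)
          (by simp only [Ne, Prod.mk.injEq]; omega)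
        rcases mul_eq_zero.mp h0 with h | h
        · exact h
        · exact absurd h hknz
      -- r 1 ≡ 0
      have h11 : (r 1 : ZMod p) = 0 := by
        rw [hnn, zero_add] at hA
        exact mul_self_eq_zero.mp hA
      have h0 := hB 2 le_rfl (by omega)
      norm_num [h11] at h0
      exact hknz h0
    · by_cases hkeqn : k = n
      · rw [hkeqn] at hknz
        -- r (n-2) ≡ 0
        have hn2 : (r (n - 2) : ZMod p) = 0 := by
          have h0 := hC n (n - 2) le_rfl (by omega) (by omega)
            (by simp only [Ne, Prod.mk.injEq]; omega)
          rcases mul_eq_zero.mp h0 with h | h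
          · exact absurd h hknz
          · exact h
        -- r (n-1) ≡ 0
        have hn1 : (r (n - 1) : ZMod p) = 0 := by
          have h0 := hB (n - 1) (by omega) (by omega)
          rw [show n - 1 - 1 = n - 2 by omega, hn2] at h0
          simp only [mul_zero, zero_add] at h0
          exact mul_self_eq_zero.mp h0
        have h0 := hB n (by omega) le_rfl
        rw [hn1] at h0
        simp only [mul_zero, zero_add] at h0
        exact hknz (mul_self_eq_zero.mp h0)
      · -- 3 ≤ k ≤ n - 1
        have hk3 : 3 ≤ k := by omega
        have hkn' : k ≤ n - 1 := by omega
        -- r (k-2) ≡ 0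
        have hk2' : (r (k - 2) : ZMod p) = 0 := by
          have h0 := hC k (k - 2) (by omega) (by omega) (by omega)
            (by simp only [Ne, Prod.mk.injEq]; omega)
          rcases mul_eq_zero.mp h0 with h | h
          · exact absurd h hknz
          · exact h
        -- r (k-1) ≡ 0
        have hk1' : (r (k - 1) : ZMod p) = 0 := by
          have h0 := hB (k - 1) (by omega) (by omega)
          rw [show k - 1 - 1 = k - 2 by omega, hk2'] at h0
          simp only [mul_zero, zero_add] at h0
          exact mul_self_eq_zero.mp h0
        have h0 := hB k (by omega) (by omega)
        rw [hk1'] at h0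
        simp only [mul_zero, zero_add] at h0
        exact hknz (mul_self_eq_zero.mp h0)
end
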